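/- Let p be an odd prime. There exists an element π = π₀ + π₁i + π₂j + π₃k ∈ 𝒫(p) with π₀ = 0 if and only if p ≡ 3 (mod 8). -/

import Mathlib

open Quaternion

/-- The content of an integral quaternion: the gcd of its four coordinates. -/
def content (a : ℍ[ℤ]) : ℕ :=
  Int.gcd (Int.gcd a.re a.imI) (Int.gcd a.imJ a.imK)

/-- An integral quaternion is primitive if its content is `1`. -/
def Primitive (a : ℍ[ℤ]) : Prop := content a = 1

/-- The eight units of `ℍ[ℤ]`: `±1, ±i, ±j, ±k`. -/
def quatUnits : Set ℍ[ℤ] :=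
  {1, -1, ⟨0, 1, 0, 0⟩, ⟨0, -1, 0, 0⟩, ⟨0, 0, 1, 0⟩, ⟨0, 0, -1, 0⟩, ⟨0, 0, 0, 1⟩, ⟨0, 0, 0, -1⟩}

/-- The distinguished set `𝒫(p)` of quaternions of norm `p` (for an odd prime `p`). -/
def Pset (p : ℕ) : Set ℍ[ℤ] :=
  {π | Primitive π ∧ Quaternion.normSq π = (p : ℤ) ∧
    (if p % 4 = 1 then
      0 < π.re ∧ ∃ β : ℍ[ℤ], π - 1 = 2 * β
    else
      (∃ β : ℍ[ℤ], π - ⟨0, 1, 1, 1⟩ = 2 * β) ∧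
        (π.re ≠ 0 → 0 < π.re) ∧ (π.re = 0 → 0 < π.imI))}

/-- There is an element of `𝒫(p)` with vanishing real part
iff `p ≡ 3 (mod 8)`. -/


lemma thue (p : ℕ) (hp : p.Prime) (a : ZMod p) (ha : a * a = -2) :
    ∃ u v : ℤ, u ^ 2 + 2 * v ^ 2 = p := by
  classical
  haveI : Fact p.Prime := ⟨hp⟩
  set k := Nat.sqrt p with hk
  have hksq : k * k < p := by
    rcases Nat.lt_or_ge (k*k) p with h | h
    · exact h
    · exfalso
      have h2 : k * k = p := le_antisymm (by simpa [pow_two] using Nat.sqrt_le' p) h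
      have hdvd : k ∣ p := ⟨k, h2.symm⟩
      have h1 := hp.one_lt
      rcases hp.eq_one_or_self_of_dvd k hdvd with h3 | h3 <;> rw [h3] at h2 <;> nlinarith
  have hcard : Fintype.card (ZMod p) < ((Finset.Iic k) ×ˢ (Finset.Iic k)).card := by
    have hc : ((Finset.Iic k) ×ˢ (Finset.Iic k)).card = (k+1) * (k+1) := by
      simp [Finset.card_product, Nat.card_Iic]
    rw [hc, ZMod.card]
    have := Nat.lt_succ_sqrt' p
    nlinarith
  obtain ⟨x, hx, y, hy, hxy, hfe⟩ :=
    Finset.exists_ne_map_eq_of_card_lt_of_maps_to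
      (f := fun z : ℕ × ℕ => ((z.1 : ZMod p) - a * z.2))
      (by rw [Finset.card_univ]; exact hcard)
      (fun z _ => Finset.mem_univ _)
  -- set u, v
  obtain ⟨u, hu⟩ : ∃ u : ℤ, u = (x.1 : ℤ) - y.1 := ⟨_, rfl⟩
  obtain ⟨v, hv⟩ : ∃ v : ℤ, v = (x.2 : ℤ) - y.2 := ⟨_, rfl⟩
  have hcong : ((u : ZMod p)) = a * (v : ZMod p) := by
    rw [hu, hv]; push_cast
    have : ((x.1 : ZMod p)) - a * x.2 = (y.1 : ZMod p) - a * y.2 := hfe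
    ring_nf
    ring_nf at this
    linear_combination this
  have hdvd : (p : ℤ) ∣ u ^ 2 + 2 * v ^ 2 := by
    rw [← ZMod.intCast_zmod_eq_zero_iff_dvd]
    push_cast
    rw [hcong]
    ring_nf
    rw [show a ^ 2 = a * a by ring, ha]; ring
  have hne : ¬ (u = 0 ∧ v = 0) := by
    rintro ⟨h1, h2⟩
    apply hxy
    have e1 : x.1 = y.1 := by omega
    have e2 : x.2 = y.2 := by omega
    exact Prod.ext e1 e2
  have hpos : 0 < u ^ 2 + 2 * v ^ 2 := by
    rcases not_and_or.mp hne with h | h <;> positivity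
  have hub : u ^ 2 + 2 * v ^ 2 < 3 * p := by
    simp only [Finset.mem_product, Finset.mem_Iic] at hx hy
    have b1 : u ^ 2 ≤ (k : ℤ) * k := by
      have : |u| ≤ (k : ℤ) := by rw [hu]; rw [abs_le]; omega
      nlinarith [abs_nonneg u, sq_abs u]
    have b2 : v ^ 2 ≤ (k : ℤ) * k := by
      have : |v| ≤ (k : ℤ) := by rw [hv]; rw [abs_le]; omega
      nlinarith [abs_nonneg v, sq_abs v]
    have : (k : ℤ) * k < p := by exact_mod_cast hksq
    nlinarith
  obtain ⟨m, hm⟩ := hdvd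
  have hple := hp.two_le
  have hm12 : m = 1 ∨ m = 2 := by
    have h0 : 0 < m := by nlinarith [Int.natCast_pos.mpr (Nat.lt_of_lt_of_le Nat.zero_lt_two hple)]
    by_contra hcon
    have : 3 ≤ m := by omega
    nlinarith [Int.natCast_pos.mpr (Nat.lt_of_lt_of_le Nat.zero_lt_two hple)]
  rcases hm12 with rfl | rfl
  · exact ⟨u, v, by linarith⟩
  · -- u^2 + 2v^2 = 2p, so u even
    have hue : Even (u ^ 2) := ⟨(p : ℤ) - v ^ 2, by linarith⟩
    obtain ⟨w, hw⟩ := (Int.even_pow.mp hue).1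
    refine ⟨v, w, ?_⟩
    have huw : u = 2 * w := by omega
    rw [huw] at hm
    have h2 : 2 * (v ^ 2 + 2 * w ^ 2) = 2 * p := by linear_combination hm
    linarith

lemma odd_sq_mod8 (x : ℤ) (h : Odd x) : ∃ m : ℤ, x ^ 2 = 8 * m + 1 := by
  obtain ⟨c, rfl⟩ := h
  obtain ⟨d, hd⟩ := Int.even_mul_succ_self c
  exact ⟨d, by linear_combination 4 * hd⟩

lemma rep (p : ℕ) (hp : p.Prime) (h8 : p % 8 = 3)
    (thue : ∀ a : ZMod p, a * a = -2 → ∃ u v : ℤ, u ^ 2 + 2 * v ^ 2 = p) :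
    ∃ a b : ℤ, a ^ 2 + 2 * b ^ 2 = p ∧ Odd a ∧ Odd b := by
  haveI : Fact p.Prime := ⟨hp⟩
  have hp2 : p ≠ 2 := by omega
  obtain ⟨r, hr⟩ := (ZMod.exists_sq_eq_neg_two_iff hp2).mpr (Or.inr h8)
  obtain ⟨a, b, hab⟩ := thue r hr.symm
  have hao : Odd a := by
    rcases Int.even_or_odd a with h | h
    · exfalso
      obtain ⟨c, rfl⟩ := h
      have : Even (p : ℤ) := ⟨2 * c ^ 2 + b ^ 2, by linear_combination -hab⟩
      obtain ⟨e, he⟩ := this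
      omega
    · exact h
  have hbo : Odd b := by
    rcases Int.even_or_odd b with h | h
    · exfalso
      obtain ⟨d, rfl⟩ := h
      obtain ⟨m, hm⟩ := odd_sq_mod8 a hao
      have hdd : a ^ 2 + 2 * (d + d) ^ 2 = 8 * (m + d ^ 2) + 1 := by linear_combination hm
      rw [hdd] at hab
      omega
    · exact h
  exact ⟨a, b, hab, hao, hbo⟩

theorem stmt_9 (p : ℕ) (hp : p.Prime) (hodd : Odd p) :
    (∃ π ∈ Pset p, π.re = 0) ↔ p % 8 = 3 := by
  have rep := fun h8 => rep p hp h8 (thue p hp)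
  have hodd2 : p % 2 = 1 := Nat.odd_iff.mp hodd
  constructor
  · rintro ⟨π, ⟨hprim, hnorm, hcond⟩, hre⟩
    by_cases h4 : p % 4 = 1
    · rw [if_pos h4] at hcond
      rw [hre] at hcond
      exact absurd hcond.1 (lt_irrefl 0)
    · rw [if_neg h4] at hcond
      obtain ⟨⟨β, hβ⟩, -, -⟩ := hcond
      rw [two_mul] at hβ
      have hI : Odd π.imI := by
        have := congrArg QuaternionAlgebra.imI hβ
        change π.imI - 1 = β.imI + β.imI at this
        exact ⟨β.imI, by simpa using by linarith [this]⟩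
      have hJ : Odd π.imJ := by
        have := congrArg QuaternionAlgebra.imJ hβ
        change π.imJ - 1 = β.imJ + β.imJ at this
        exact ⟨β.imJ, by simpa using by linarith [this]⟩
      have hK : Odd π.imK := by
        have := congrArg QuaternionAlgebra.imK hβ
        change π.imK - 1 = β.imK + β.imK at this
        exact ⟨β.imK, by simpa using by linarith [this]⟩
      rw [Quaternion.normSq_def', hre] at hnorm
      obtain ⟨m1, hm1⟩ := odd_sq_mod8 _ hI
      obtain ⟨m2, hm2⟩ := odd_sq_mod8 _ hJ
      obtain ⟨m3, hm3⟩ := odd_sq_mod8 _ hK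
      have : (p : ℤ) = 8 * (m1 + m2 + m3) + 3 := by
        rw [← hnorm, hm1, hm2, hm3]; ring
      omega
  · intro h8
    obtain ⟨a, b, hab, hao, hbo⟩ := rep h8
    have haabs : Odd |a| := by rcases abs_cases a with ⟨h, _⟩ | ⟨h, _⟩ <;> rw [h]
                               exacts [hao, hao.neg]
    have hbabs : Odd |b| := by rcases abs_cases b with ⟨h, _⟩ | ⟨h, _⟩ <;> rw [h]
                               exacts [hbo, hbo.neg]
    obtain ⟨s, hs⟩ := haabs
    obtain ⟨t, ht⟩ := hbabs
    have hsnn : 0 ≤ s := by have := abs_nonneg a; omega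
    have htnn : 0 ≤ t := by have := abs_nonneg b; omega
    refine ⟨⟨0, |a|, |b|, |b|⟩, ⟨?_, ?_, ?_⟩, rfl⟩
    · -- Primitive
      have hcc : content ⟨0, |a|, |b|, |b|⟩ = Nat.gcd a.natAbs b.natAbs := by
        simp [content, Int.gcd, Int.natAbs_abs]
      unfold Primitive; rw [hcc]
      set g : ℕ := Nat.gcd a.natAbs b.natAbs with hg
      have hda : (g : ℤ) ∣ a := Int.gcd_dvd_left a b
      have hdb : (g : ℤ) ∣ b := Int.gcd_dvd_right a b
      obtain ⟨A, hA⟩ := hda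
      obtain ⟨B, hB⟩ := hdb
      have hsq : (g * g : ℤ) ∣ (p : ℤ) :=
        ⟨A ^ 2 + 2 * B ^ 2, by rw [← hab, hA, hB]; ring⟩
      have hsqn : g * g ∣ p := by exact_mod_cast hsq
      rcases hp.eq_one_or_self_of_dvd (g * g) hsqn with h | h
      · exact Nat.eq_one_of_mul_eq_one_left h
      · exfalso
        have hdg : g ∣ p := ⟨g, h.symm⟩
        rcases hp.eq_one_or_self_of_dvd g hdg with h1 | h1
        · rw [h1] at h; have := hp.one_lt; omega
        · rw [h1] at h; have := hp.one_lt; nlinarith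
    · -- normSq
      erw [Quaternion.normSq_def']
      show (0:ℤ) ^ 2 + |a| ^ 2 + |b| ^ 2 + |b| ^ 2 = p
      rw [sq_abs, sq_abs]
      linear_combination hab
    · rw [if_neg (by omega)]
      refine ⟨⟨⟨0, s, t, t⟩, ?_⟩, fun h => absurd rfl h, fun _ => by show (0:ℤ) < |a|; omega⟩
      erw [two_mul]
      ext
      · show (0:ℤ) - 0 = 0 + 0; omega
      · show |a| - 1 = s + s; omega
      · show |b| - 1 = t + t; omega
      · show |b| - 1 = t + t; omega
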